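/- Generalized characteristic equation: suppose A·v = v·λ, i.e. a·y + conj(b)·z = x·(λ − p), c·z + conj(a)·x = y·(λ − m), and b·x + conj(c)·y = z·(λ − n). Set σ := p·m + p·n + m·n − |a|² − |b|² − |c|² and δ := p·m·n + 2·Re(b·(a·c)) − n·|a|² − m·|b|² − p·|c|². Then z·(λ³ − (p+m+n)·λ² + σ·λ − δ) = b·(a·(c·z)) + conj(c)·(conj(a)·(conj(b)·z)) − (b·(a·c) + (conj(c)·conj(a))·conj(b))·z + b·[a, y, λ] + [b, a·y, λ] + [b, x, λ]·(λ − m) + conj(c)·[conj(a), x, λ] + [conj(c), conj(a)·x, λ] + [conj(c), y, λ]·(λ − p), where λ² := λ·λ and λ³ := (λ·λ)·λ. -/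

import Mathlib

noncomputable section

open Quaternion

/-- The octonions, realized as the Cayley–Dickson double of the real quaternions:
pairs of quaternions. -/
abbrev 𝕆 : Type := ℍ[ℝ] × ℍ[ℝ]

namespace Octonion

/-- Cayley–Dickson multiplication: `(a, b)·(c, d) = (a·c − conj(d)·b, d·a + b·conj(c))`. -/
def omul (x y : 𝕆) : 𝕆 :=
  (x.1 * y.1 - star y.2 * x.2, y.2 * x.1 + x.2 * star y.1)

/-- Octonionic conjugation: `conj (a, b) = (conj a, −b)`. -/
def oconj (x : 𝕆) : 𝕆 := (star x.1, -x.2)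

/-- The embedding of the reals, `r ↦ (r, 0)`. -/
def oR (r : ℝ) : 𝕆 := ((r : ℍ[ℝ]), 0)

/-- The unit octonion `1 = (1, 0)`. -/
def o1 : 𝕆 := oR 1

/-- The associator `[a,b,c] = (a·b)·c − a·(b·c)`. -/
def oassoc (a b c : 𝕆) : 𝕆 := omul (omul a b) c - omul a (omul b c)

/-- The inner product: the real number with `(a·conj b + b·conj a)/2 = (a ⋅ b)·1`. -/
def odot (x y : 𝕆) : ℝ := (omul x (oconj y) + omul y (oconj x)).1.re / 2

/-- The squared norm `|x|²`, the real number with `x·conj x = |x|²·1`. -/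
def onormSq (x : 𝕆) : ℝ := odot x x

/-- The real part of an octonion, as a real number. -/
def oreR (x : 𝕆) : ℝ := x.1.re

/-- The imaginary part `Im(x) = (x − conj x)/2`. -/
def oIm (x : 𝕆) : 𝕆 := (2:ℝ)⁻¹ • (x - oconj x)

/-- The imaginary units. -/
def oi : 𝕆 := (⟨0,1,0,0⟩, 0)
def oj : 𝕆 := (⟨0,0,1,0⟩, 0)
def ok : 𝕆 := (⟨0,0,0,1⟩, 0)
def ol : 𝕆 := (0, 1)
def oil : 𝕆 := (0, ⟨0,1,0,0⟩)
def ojl : 𝕆 := (0, ⟨0,0,1,0⟩)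
def okl : 𝕆 := (0, ⟨0,0,0,1⟩)

end Octonion

namespace Octonion

set_option maxHeartbeats 1600000 in
theorem omul_add' (u v w : 𝕆) : omul u (v + w) = omul u v + omul u w := by
  refine Prod.ext ?_ ?_ <;> simp [omul, mul_add, add_mul, star_add] <;> abel

set_option maxHeartbeats 1600000 in
theorem add_omul' (u v w : 𝕆) : omul (u + v) w = omul u w + omul v w := by
  refine Prod.ext ?_ ?_ <;> simp [omul, mul_add, add_mul, star_add] <;> abel

set_option maxHeartbeats 1600000 in
theorem omul_sub' (u v w : 𝕆) : omul u (v - w) = omul u v - omul u w := by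
  refine Prod.ext ?_ ?_ <;> simp [omul, mul_sub, sub_mul, star_sub] <;> abel

set_option maxHeartbeats 1600000 in
theorem sub_omul' (u v w : 𝕆) : omul (u - v) w = omul u w - omul v w := by
  refine Prod.ext ?_ ?_ <;> simp [omul, mul_sub, sub_mul, star_sub] <;> abel

set_option maxHeartbeats 1600000 in
theorem omul_smul' (r : ℝ) (u v : 𝕆) : omul u (r • v) = r • omul u v := by
  refine Prod.ext ?_ ?_ <;>
    simp [omul, mul_smul_comm, smul_mul_assoc, Quaternion.star_smul, smul_sub, smul_add]

set_option maxHeartbeats 1600000 in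
theorem smul_omul' (r : ℝ) (u v : 𝕆) : omul (r • u) v = r • omul u v := by
  refine Prod.ext ?_ ?_ <;>
    simp [omul, mul_smul_comm, smul_mul_assoc, Quaternion.star_smul, smul_sub, smul_add]

set_option maxHeartbeats 1600000 in
theorem oR_omul' (r : ℝ) (u : 𝕆) : omul (oR r) u = r • u := by
  obtain ⟨qa, qb⟩ := u
  refine Prod.ext ?_ ?_ <;> ext <;>
  simp [omul, oR, Quaternion.re_mul, Quaternion.imI_mul,
    Quaternion.imJ_mul, Quaternion.imK_mul, Quaternion.re_coe, Quaternion.imI_coe,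
    Quaternion.imJ_coe, Quaternion.imK_coe] <;> ring

set_option maxHeartbeats 1600000 in
theorem omul_oR' (r : ℝ) (u : 𝕆) : omul u (oR r) = r • u := by
  obtain ⟨qa, qb⟩ := u
  refine Prod.ext ?_ ?_ <;> ext <;>
  simp [omul, oR, Quaternion.re_mul, Quaternion.imI_mul,
    Quaternion.imJ_mul, Quaternion.imK_mul, Quaternion.re_coe, Quaternion.imI_coe,
    Quaternion.imJ_coe, Quaternion.imK_coe] <;> ring

set_option maxHeartbeats 1600000 in
theorem key1' (u v : 𝕆) : omul u (omul (oconj u) v) = onormSq u • v := by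
  obtain ⟨qa, qb⟩ := u
  obtain ⟨qc, qd⟩ := v
  refine Prod.ext ?_ ?_ <;> ext <;>
  simp [omul, oconj, onormSq, odot, Quaternion.re_mul, Quaternion.imI_mul,
    Quaternion.imJ_mul, Quaternion.imK_mul] <;> ring

set_option maxHeartbeats 1600000 in
theorem key2' (u v : 𝕆) : omul (oconj u) (omul u v) = onormSq u • v := by
  obtain ⟨qa, qb⟩ := u
  obtain ⟨qc, qd⟩ := v
  refine Prod.ext ?_ ?_ <;> ext <;>
  simp [omul, oconj, onormSq, odot, Quaternion.re_mul, Quaternion.imI_mul,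
    Quaternion.imJ_mul, Quaternion.imK_mul] <;> ring

set_option maxHeartbeats 1600000 in
theorem oconj_omul' (u v : 𝕆) : oconj (omul u v) = omul (oconj v) (oconj u) := by
  obtain ⟨qa, qb⟩ := u
  obtain ⟨qc, qd⟩ := v
  refine Prod.ext ?_ ?_ <;> ext <;>
  simp [omul, oconj, Quaternion.re_mul, Quaternion.imI_mul,
    Quaternion.imJ_mul, Quaternion.imK_mul] <;> ring

set_option maxHeartbeats 1600000 in
theorem self_add_oconj' (u : 𝕆) : u + oconj u = oR (2 * oreR u) := by
  obtain ⟨qa, qb⟩ := u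
  refine Prod.ext ?_ ?_ <;> ext <;>
  simp [oconj, oR, oreR] <;> ring

set_option maxHeartbeats 4000000 in
theorem artin2' (z l : 𝕆) : omul z (omul l l) = omul (omul z l) l := by
  obtain ⟨qa, qb⟩ := z
  obtain ⟨qc, qd⟩ := l
  refine Prod.ext ?_ ?_ <;> ext <;>
  simp [omul, Quaternion.re_mul, Quaternion.imI_mul,
    Quaternion.imJ_mul, Quaternion.imK_mul] <;> ring

theorem artin3' (z l : 𝕆) :
    omul z (omul (omul l l) l) = omul (omul (omul z l) l) l := by
  have h := artin2' z (l + omul l l)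
  simp only [omul_add', add_omul'] at h
  rw [artin2' l l] at h
  rw [artin2' z (omul l l)] at h
  rw [artin2' z l] at h
  rw [artin2' (omul (omul z l) l) l] at h
  rw [artin2' (omul z l) l] at h
  have h2 : (2:ℤ) • (omul z (omul (omul l l) l) - omul (omul (omul z l) l) l) = 0 := by
    rw [← sub_eq_zero] at h
    rw [← h]
    abel
  have h3 : omul z (omul (omul l l) l) - omul (omul (omul z l) l) l = 0 := by
    have h4 : (2:ℝ) • (omul z (omul (omul l l) l) - omul (omul (omul z l) l) l) = 0 := by
      rw [two_smul]; rw [two_zsmul] at h2; exact h2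
    exact (smul_eq_zero.mp h4).resolve_left (by norm_num)
  exact sub_eq_zero.mp h3

end Octonion


open Octonion

/-- The generalized characteristic equation for right eigenvalues of a
`3×3` octonionic Hermitian matrix. -/
theorem generalized_characteristic_equation (p m n : ℝ) (a b c x y z lam : 𝕆)
    (h1 : omul a y + omul (oconj b) z = omul x (lam - oR p))
    (h2 : omul c z + omul (oconj a) x = omul y (lam - oR m))
    (h3 : omul b x + omul (oconj c) y = omul z (lam - oR n)) :
    omul z (omul (omul lam lam) lam
        - omul (oR (p + m + n)) (omul lam lam)
        + omul (oR (p*m + p*n + m*n - onormSq a - onormSq b - onormSq c)) lam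
        - oR (p*m*n + 2 * oreR (omul b (omul a c))
              - n * onormSq a - m * onormSq b - p * onormSq c)) =
      omul b (omul a (omul c z)) + omul (oconj c) (omul (oconj a) (omul (oconj b) z))
        - omul (omul b (omul a c) + omul (omul (oconj c) (oconj a)) (oconj b)) z
        + omul b (oassoc a y lam) + oassoc b (omul a y) lam
        + omul (oassoc b x lam) (lam - oR m)
        + omul (oconj c) (oassoc (oconj a) x lam) + oassoc (oconj c) (omul (oconj a) x) lam
        + omul (oassoc (oconj c) y lam) (lam - oR p) := by
  have E1 : omul x lam = omul a y + omul (oconj b) z + p • x := by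
    rw [omul_sub', omul_oR'] at h1; rw [h1]; abel
  have E2 : omul y lam = omul c z + omul (oconj a) x + m • y := by
    rw [omul_sub', omul_oR'] at h2; rw [h2]; abel
  have E3 : omul z lam = omul b x + omul (oconj c) y + n • z := by
    rw [omul_sub', omul_oR'] at h3; rw [h3]; abel
  have keyC : omul (omul (oconj c) (oconj a)) (oconj b)
      = oR (2 * oreR (omul b (omul a c))) - omul b (omul a c) := by
    rw [← oconj_omul', ← oconj_omul', eq_sub_iff_add_eq, add_comm]
    exact self_add_oconj' _
  simp only [oassoc, keyC, omul_add', add_omul', omul_sub', sub_omul', omul_smul', smul_omul',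
    omul_oR', oR_omul', artin3', artin2', key1', key2', E1, E2, E3]
  module
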